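/- For every x ∈ (0,∞) there is exactly one integer k ∈ ℤ such that s_k(x) ∈ [1/3, 3); consequently the intervals s_k([1/3,3)), k ∈ ℤ, partition (0,∞). Moreover, for every x ∈ (0,∞) and j ≥ 1: if x ≤ 3 then s_j(x) ≤ 2·6^{−2^{j−1}}, and if x ≥ 1/3 then s_{−j}(x) ≥ (1/2)·6^{2^{j−1}}. -/

import Mathlib

/-- `ω(x) = √(8x+1)`. -/
noncomputable def wF (x : ℝ) : ℝ := Real.sqrt (8 * x + 1)

/-- `s(x) = (ω−1)²/(4(ω+7))`. -/
noncomputable def sF (x : ℝ) : ℝ := (wF x - 1) ^ 2 / (4 * (wF x + 7))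

/-- `s₋₁(x) = 1/s(1/x)`, the inverse of `s`. -/
noncomputable def sFinv (x : ℝ) : ℝ := 1 / sF (1 / x)

/-- The ℤ-indexed iterates of `s`. -/
noncomputable def sIter (k : ℤ) (x : ℝ) : ℝ :=
  if 0 ≤ k then sF^[k.toNat] x else sFinv^[(-k).toNat] x

lemma wF_sq {x : ℝ} (hx : 0 ≤ x) : wF x ^ 2 = 8 * x + 1 :=
  Real.sq_sqrt (by linarith)

lemma wF_one_lt {x : ℝ} (hx : 0 < x) : 1 < wF x := by
  have : (1:ℝ) = Real.sqrt 1 := (Real.sqrt_one).symm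
  rw [wF, this]
  exact Real.sqrt_lt_sqrt (by norm_num) (by linarith)

lemma wF_nonneg (x : ℝ) : 0 ≤ wF x := Real.sqrt_nonneg _

lemma sF_pos {x : ℝ} (hx : 0 < x) : 0 < sF x := by
  have h1 := wF_one_lt hx
  exact div_pos (pow_pos (by linarith) 2) (by linarith)

lemma sF_lt_self {x : ℝ} (hx : 0 < x) : sF x < x := by
  have h1 := wF_one_lt hx
  have h2 := wF_sq hx.le
  rw [sF, div_lt_iff₀ (by linarith)]
  nlinarith [sq_nonneg (wF x - 1), sq_nonneg (wF x + 1)]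

lemma sF_strictMono {x y : ℝ} (hx : 0 < x) (hxy : x < y) : sF x < sF y := by
  have h1 := wF_one_lt hx
  have h1' := wF_one_lt (hx.trans hxy)
  have h2 : wF x < wF y := Real.sqrt_lt_sqrt (by linarith) (by linarith)
  rw [sF, sF, div_lt_div_iff₀ (by linarith) (by linarith)]
  nlinarith [mul_pos (sub_pos.mpr h2) (show (0:ℝ) < wF x * wF y + 7 * wF x + 7 * wF y - 15 by nlinarith)]

lemma sF_le_half_sq {x : ℝ} (hx : 0 < x) : sF x ≤ x ^ 2 / 2 := by
  have h1 := wF_one_lt hx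
  have h2 := wF_sq hx.le
  rw [sF, div_le_div_iff₀ (by linarith) (by norm_num)]
  nlinarith [sq_nonneg (wF x - 1), sq_nonneg (wF x + 1), sq_nonneg ((wF x - 1)*(wF x + 1))]

lemma sF_le_third {x : ℝ} (hx : 0 < x) (hx3 : x ≤ 3) : sF x ≤ 1 / 3 := by
  have h1 := wF_one_lt hx
  have h2 := wF_sq hx.le
  have h5 : wF x ≤ 5 := by nlinarith [wF_nonneg x]
  rw [sF, div_le_div_iff₀ (by linarith) (by norm_num)]
  nlinarith

lemma sFinv_pos {x : ℝ} (hx : 0 < x) : 0 < sFinv x :=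
  one_div_pos.mpr (sF_pos (by positivity))

lemma sF_sFinv {x : ℝ} (hx : 0 < x) : sF (sFinv x) = x := by
  have hx0 : (0:ℝ) < 1/x := by positivity
  set ω := wF (1/x) with hωdef
  have hω : 1 < ω := wF_one_lt hx0
  have hω2 : ω ^ 2 = 8 * (1/x) + 1 := wF_sq hx0.le
  have hω2' : ω ^ 2 * x = 8 + x := by
    field_simp at hω2; linarith
  have h1 : ω - 1 ≠ 0 := by intro h; nlinarith
  have hz : sFinv x = 4 * (ω + 7) / (ω - 1)^2 := by
    rw [sFinv, sF, one_div_div]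
  have h8z : 8 * sFinv x + 1 = ((ω + 15) / (ω - 1))^2 := by
    rw [hz]; field_simp; ring
  have hwz : wF (sFinv x) = (ω + 15)/(ω - 1) := by
    have : (0:ℝ) ≤ (ω + 15)/(ω - 1) := le_of_lt (div_pos (by linarith) (by linarith))
    rw [wF, h8z, Real.sqrt_sq this]
  rw [sF, hwz]
  have e1 : (ω + 15)/(ω - 1) - 1 = 16/(ω - 1) := by field_simp; ring
  have e2 : (ω + 15)/(ω - 1) + 7 = 8 * (ω + 1)/(ω - 1) := by field_simp; ring
  rw [e1, e2]
  rw [div_eq_iff (by positivity)]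
  field_simp
  linear_combination (-32) * hω2'

lemma sFinv_sF {x : ℝ} (hx : 0 < x) : sFinv (sF x) = x := by
  have h1 : 0 < sF x := sF_pos hx
  have h2 : 0 < sFinv (sF x) := sFinv_pos h1
  have h3 : sF (sFinv (sF x)) = sF x := sF_sFinv h1
  by_contra hne
  rcases lt_or_gt_of_ne hne with h | h
  · exact absurd h3 (ne_of_lt (sF_strictMono h2 h))
  · exact absurd h3 (ne_of_gt (sF_strictMono hx h))

lemma sFinv_strictMono {x y : ℝ} (hx : 0 < x) (hxy : x < y) : sFinv x < sFinv y := by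
  have hy : 0 < y := hx.trans hxy
  have h1 : (0:ℝ) < 1 / y := by positivity
  have h2 : sF (1/y) < sF (1/x) := sF_strictMono h1 (one_div_lt_one_div_of_lt hx hxy)
  have h3 : 0 < sF (1/y) := sF_pos h1
  rw [sFinv, sFinv]
  exact one_div_lt_one_div_of_lt h3 h2

lemma sFinv_gt_self {x : ℝ} (hx : 0 < x) : x < sFinv x := by
  have h1 : (0:ℝ) < 1/x := by positivity
  have h2 : sF (1/x) < 1/x := sF_lt_self h1
  have h3 : 0 < sF (1/x) := sF_pos h1
  rw [sFinv]
  rw [lt_div_iff₀ h3]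
  calc x * sF (1/x) < x * (1/x) := mul_lt_mul_of_pos_left h2 hx
    _ = 1 := by field_simp

lemma sF_iter_pos (n : ℕ) {x : ℝ} (hx : 0 < x) : 0 < sF^[n] x := by
  induction n with
  | zero => simpa
  | succ n ih => rw [Function.iterate_succ_apply']; exact sF_pos ih

lemma sFinv_iter_pos (n : ℕ) {x : ℝ} (hx : 0 < x) : 0 < sFinv^[n] x := by
  induction n with
  | zero => simpa
  | succ n ih => rw [Function.iterate_succ_apply']; exact sFinv_pos ih

lemma sIter_pos (k : ℤ) {x : ℝ} (hx : 0 < x) : 0 < sIter k x := by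
  rw [sIter]; split
  · exact sF_iter_pos _ hx
  · exact sFinv_iter_pos _ hx

lemma sIter_succ (k : ℤ) {x : ℝ} (hx : 0 < x) : sIter (k + 1) x = sF (sIter k x) := by
  rcases le_or_gt 0 k with hk | hk
  · rw [sIter, sIter, if_pos hk, if_pos (by linarith)]
    have : (k + 1).toNat = k.toNat + 1 := by omega
    rw [this, Function.iterate_succ_apply']
  · have hk1 : ¬ (0 ≤ k) := not_le.mpr hk
    have hm : (-k).toNat = (-(k+1)).toNat + 1 := by omega
    rcases eq_or_lt_of_le (by omega : k + 1 ≤ 0) with he | hlt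
    · rw [sIter, sIter, if_pos (le_of_eq he.symm), if_neg hk1, he]
      simp only [Int.toNat_zero, Function.iterate_zero_apply]
      have : (-k).toNat = 1 := by omega
      rw [this]
      simpa using (sF_sFinv hx).symm
    · rw [sIter, sIter, if_neg (by omega), if_neg hk1, hm,
        Function.iterate_succ_apply']
      exact (sF_sFinv (sFinv_iter_pos _ hx)).symm

lemma sIter_pred (k : ℤ) {x : ℝ} (hx : 0 < x) : sIter (k - 1) x = sFinv (sIter k x) := by
  have h := sIter_succ (k - 1) hx
  rw [sub_add_cancel] at h
  rw [h, sFinv_sF (sIter_pos _ hx)]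

lemma sIter_add (k m : ℤ) {x : ℝ} (hx : 0 < x) : sIter k (sIter m x) = sIter (k + m) x := by
  induction k using Int.induction_on with
  | zero => simp [sIter]
  | succ n ih =>
      rw [sIter_succ _ (sIter_pos m hx), ih]
      rw [show (n:ℤ) + 1 + m = (n + m) + 1 by ring, sIter_succ _ hx]
  | pred n ih =>
      rw [show (-(n:ℤ) - 1) = (-(n:ℤ)) - 1 by ring, sIter_pred _ (sIter_pos m hx), ih]
      rw [show (-(n:ℤ) - 1 + m) = (-(n:ℤ) + m) - 1 by ring, sIter_pred _ hx]

lemma sIter_lt (k : ℤ) {x y : ℝ} (hx : 0 < x) (hxy : x < y) : sIter k x < sIter k y := by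
  induction k using Int.induction_on with
  | zero => simpa [sIter]
  | succ n ih =>
      rw [sIter_succ _ hx, sIter_succ _ (hx.trans hxy)]
      exact sF_strictMono (sIter_pos _ hx) ih
  | pred n ih =>
      rw [show (-(n:ℤ) - 1) = (-(n:ℤ)) - 1 by ring, sIter_pred _ hx, sIter_pred _ (hx.trans hxy)]
      exact sFinv_strictMono (sIter_pos _ hx) ih

lemma sIter_lt_iff (k : ℤ) {x y : ℝ} (hx : 0 < x) (hy : 0 < y) :
    sIter k x < sIter k y ↔ x < y := by
  constructor
  · intro h
    by_contra hc
    rcases eq_or_lt_of_le (not_lt.mp hc) with he | hlt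
    · rw [he] at h; exact lt_irrefl _ h
    · exact absurd h (not_lt.mpr (sIter_lt k hy hlt).le)
  · exact sIter_lt k hx

lemma sIter_le_iff (k : ℤ) {x y : ℝ} (hx : 0 < x) (hy : 0 < y) :
    sIter k x ≤ sIter k y ↔ x ≤ y := by
  rw [← not_lt, ← not_lt, sIter_lt_iff k hy hx]

lemma sF_three : sF (3:ℝ) = 1 / 3 := by
  have h : wF (3:ℝ) = 5 := by
    rw [wF, show (8*3+1:ℝ) = 5^2 by norm_num, Real.sqrt_sq (by norm_num)]
  rw [sF, h]; norm_num

lemma sF_iter_decay {x : ℝ} (hx : 0 < x) (hx3 : x ≤ 3) (j : ℕ) (hj : 1 ≤ j) :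
    sF^[j] x ≤ 2 * ((6:ℝ) ^ 2 ^ (j - 1))⁻¹ := by
  obtain ⟨n, rfl⟩ : ∃ n, j = n + 1 := ⟨j - 1, by omega⟩
  clear hj
  induction n with
  | zero =>
      have h := sF_le_third hx hx3
      simp only [zero_add, pow_zero, pow_one, Function.iterate_one]
      norm_num
      linarith
  | succ n ih =>
    have hpos : 0 < sF^[n+1] x := sF_iter_pos _ hx
    have h1 : sF^[n+1+1] x = sF (sF^[n+1] x) := Function.iterate_succ_apply' _ _ _
    have ih' : sF^[n+1] x ≤ 2 * ((6:ℝ) ^ 2 ^ n)⁻¹ := by simpa using ih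
    have key : ((6:ℝ) ^ 2 ^ (n+1)) = ((6:ℝ) ^ 2 ^ n) ^ 2 := by
      rw [pow_succ 2 n, pow_mul]
    have hb : (0:ℝ) < (6:ℝ) ^ 2 ^ n := by positivity
    calc sF^[n+1+1] x ≤ (sF^[n+1] x) ^ 2 / 2 := by rw [h1]; exact sF_le_half_sq hpos
      _ ≤ (2 * ((6:ℝ) ^ 2 ^ n)⁻¹) ^ 2 / 2 := by gcongr
      _ = 2 * ((6:ℝ) ^ 2 ^ (n+1+1-1))⁻¹ := by
          simp only [Nat.add_sub_cancel]
          rw [key]; field_simp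

lemma sFinv_ge_two_sq {x : ℝ} (hx : 0 < x) : 2 * x ^ 2 ≤ sFinv x := by
  have h1 : (0:ℝ) < 1 / x := by positivity
  have h2 := sF_le_half_sq h1
  have h3 := sF_pos h1
  have h4 : sF (1/x) ≤ 1 / (2 * x ^ 2) := by
    calc sF (1/x) ≤ (1/x) ^ 2 / 2 := h2
      _ = 1 / (2 * x ^ 2) := by field_simp
  have h5 := one_div_le_one_div_of_le h3 h4
  rw [one_div_one_div] at h5
  rw [sFinv]
  linarith

lemma sFinv_ge_three {x : ℝ} (hx : 1/3 ≤ x) : 3 ≤ sFinv x := by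
  have hx0 : 0 < x := lt_of_lt_of_le (by norm_num) hx
  have h1 : (0:ℝ) < 1 / x := by positivity
  have h1' : 1 / x ≤ 3 := by
    rw [div_le_iff₀ hx0]; linarith
  have h2 := sF_le_third h1 h1'
  have h3 := sF_pos h1
  have h5 := one_div_le_one_div_of_le h3 h2
  rw [sFinv]
  calc (3:ℝ) = 1 / (1/3) := by norm_num
    _ ≤ 1 / sF (1/x) := h5

lemma sFinv_iter_growth {x : ℝ} (hx : 1/3 ≤ x) (j : ℕ) (hj : 1 ≤ j) :
    (1/2:ℝ) * 6 ^ 2 ^ (j - 1) ≤ sFinv^[j] x := by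
  have hx0 : 0 < x := lt_of_lt_of_le (by norm_num) hx
  obtain ⟨n, rfl⟩ : ∃ n, j = n + 1 := ⟨j - 1, by omega⟩
  clear hj
  induction n with
  | zero =>
      have h := sFinv_ge_three hx
      simp only [zero_add, pow_zero, pow_one, Function.iterate_one]
      norm_num
      linarith
  | succ n ih =>
    have hpos : 0 < sFinv^[n+1] x := sFinv_iter_pos _ hx0
    have h1 : sFinv^[n+1+1] x = sFinv (sFinv^[n+1] x) := Function.iterate_succ_apply' _ _ _
    have ih' : (1/2:ℝ) * 6 ^ 2 ^ n ≤ sFinv^[n+1] x := by simpa using ih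
    have key : ((6:ℝ) ^ 2 ^ (n+1)) = ((6:ℝ) ^ 2 ^ n) ^ 2 := by
      rw [pow_succ 2 n, pow_mul]
    have hb : (0:ℝ) ≤ (1/2:ℝ) * 6 ^ 2 ^ n := by positivity
    calc (1/2:ℝ) * 6 ^ 2 ^ (n+1+1-1) = 2 * ((1/2:ℝ) * 6 ^ 2 ^ n) ^ 2 := by
          simp only [Nat.add_sub_cancel]
          rw [key]; ring
      _ ≤ 2 * (sFinv^[n+1] x) ^ 2 := by gcongr
      _ ≤ sFinv (sFinv^[n+1] x) := sFinv_ge_two_sq hpos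
      _ = sFinv^[n+1+1] x := h1.symm

noncomputable def aSeq (k : ℤ) : ℝ := sIter k 3

lemma aSeq_pos (k : ℤ) : 0 < aSeq k := sIter_pos k (by norm_num)

lemma aSeq_strictAnti : StrictAnti aSeq :=
  strictAnti_int_of_succ_lt fun k => by
    rw [aSeq, aSeq, sIter_succ k (by norm_num)]
    exact sF_lt_self (sIter_pos k (by norm_num))

lemma sIter_natCast (j : ℕ) (x : ℝ) : sIter (j : ℤ) x = sF^[j] x := by
  rw [sIter, if_pos (Int.ofNat_nonneg j), Int.toNat_natCast]

lemma sIter_neg_natCast (j : ℕ) (hj : 1 ≤ j) (x : ℝ) : sIter (-(j : ℤ)) x = sFinv^[j] x := by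
  rw [sIter, if_neg (by omega), neg_neg, Int.toNat_natCast]

lemma sIter_mem_iff (k : ℤ) {x : ℝ} (hx : 0 < x) :
    sIter k x ∈ Set.Ico (1/3 : ℝ) 3 ↔ (aSeq (1 - k) ≤ x ∧ x < aSeq (-k)) := by
  have h13 : sIter 1 (3:ℝ) = 1/3 := by
    rw [show (1:ℤ) = ((1:ℕ):ℤ) by norm_num, sIter_natCast]
    simpa using sF_three
  have h1 : sIter k (aSeq (1 - k)) = 1/3 := by
    rw [aSeq, sIter_add k (1-k) (by norm_num), show k + (1-k) = 1 by ring, h13]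
  have h2 : sIter k (aSeq (-k)) = 3 := by
    rw [aSeq, sIter_add k (-k) (by norm_num), add_neg_cancel]
    simp [sIter]
  constructor
  · rintro ⟨ha, hb⟩
    exact ⟨(sIter_le_iff k (aSeq_pos _) hx).mp (by rw [h1]; exact ha),
      (sIter_lt_iff k hx (aSeq_pos _)).mp (by rw [h2]; exact hb)⟩
  · rintro ⟨ha, hb⟩
    exact ⟨by rw [← h1]; exact (sIter_le_iff k (aSeq_pos _) hx).mpr ha,
      by rw [← h2]; exact (sIter_lt_iff k hx (aSeq_pos _)).mpr hb⟩

lemma aSeq_exists_floor {x : ℝ} (hx : 0 < x) : ∃ m : ℤ, aSeq (m + 1) ≤ x ∧ x < aSeq m := by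
  classical
  obtain ⟨j0, hj0⟩ : ∃ j0 : ℕ, aSeq (j0 : ℤ) ≤ x := by
    obtain ⟨n, hn⟩ := pow_unbounded_of_one_lt (2 / x) (by norm_num : (1:ℝ) < 6)
    refine ⟨n + 1, ?_⟩
    have h1 : aSeq ((n + 1 : ℕ) : ℤ) = sF^[n + 1] 3 := by
      rw [aSeq, sIter_natCast]
    have h2 : sF^[n+1] (3:ℝ) ≤ 2 * ((6:ℝ) ^ 2 ^ n)⁻¹ := by
      simpa using sF_iter_decay (by norm_num : (0:ℝ) < 3) (by norm_num) (n+1) (by omega)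
    have h3 : (6:ℝ) ^ n ≤ 6 ^ 2 ^ n := pow_le_pow_right₀ (by norm_num) (Nat.lt_two_pow_self (n := n)).le
    have hb : (0:ℝ) < (6:ℝ) ^ 2 ^ n := by positivity
    have h5 : 2 / x < (6:ℝ) ^ 2 ^ n := lt_of_lt_of_le hn h3
    have h6 : 2 / ((6:ℝ) ^ 2 ^ n) ≤ x := by
      rw [div_le_iff₀ hb]
      rw [div_lt_iff₀ hx] at h5
      nlinarith
    rw [h1, ← div_eq_mul_inv] at *
    linarith
  obtain ⟨j1, hj1⟩ : ∃ j1 : ℕ, x < aSeq (-(j1 : ℤ)) := by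
    obtain ⟨n, hn⟩ := pow_unbounded_of_one_lt (2 * x) (by norm_num : (1:ℝ) < 6)
    refine ⟨n + 1, ?_⟩
    have h1 : aSeq (-((n + 1 : ℕ) : ℤ)) = sFinv^[n + 1] 3 := by
      rw [aSeq, sIter_neg_natCast _ (by omega)]
    have h2 : (1/2:ℝ) * 6 ^ 2 ^ n ≤ sFinv^[n+1] (3:ℝ) := by
      simpa using sFinv_iter_growth (by norm_num : (1/3:ℝ) ≤ 3) (n+1) (by omega)
    have h3 : (6:ℝ) ^ n ≤ 6 ^ 2 ^ n := pow_le_pow_right₀ (by norm_num) (Nat.lt_two_pow_self (n := n)).le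
    rw [h1]
    nlinarith
  let P : ℕ → Prop := fun n => aSeq (-(j1:ℤ) + n) ≤ x
  have hPex : ∃ n, P n := by
    refine ⟨j1 + j0, ?_⟩
    show aSeq (-(j1:ℤ) + ((j1 + j0 : ℕ) : ℤ)) ≤ x
    rw [show -(j1:ℤ) + ((j1 + j0 : ℕ) : ℤ) = (j0 : ℤ) by push_cast; ring]
    exact hj0
  let n0 := Nat.find hPex
  have hspec : aSeq (-(j1:ℤ) + n0) ≤ x := Nat.find_spec hPex
  have hn0pos : 0 < n0 := by
    rcases Nat.eq_zero_or_pos n0 with h | h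
    · exfalso
      have : aSeq (-(j1:ℤ) + (0:ℕ)) ≤ x := h ▸ hspec
      simp only [Nat.cast_zero, add_zero] at this
      linarith
    · exact h
  have hmin : ¬ P (n0 - 1) := Nat.find_min hPex (by omega)
  refine ⟨-(j1:ℤ) + n0 - 1, ?_, ?_⟩
  · rw [show -(j1:ℤ) + n0 - 1 + 1 = -(j1:ℤ) + n0 by ring]
    exact hspec
  · have : ¬ aSeq (-(j1:ℤ) + ((n0 - 1 : ℕ) : ℤ)) ≤ x := hmin
    rw [show ((n0 - 1 : ℕ) : ℤ) = (n0 : ℤ) - 1 by omega] at this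
    rw [show -(j1:ℤ) + n0 - 1 = -(j1:ℤ) + ((n0:ℤ) - 1) by ring]
    exact not_le.mp this

/-- For every `x > 0` there is a unique `k ∈ ℤ` with `s_k(x) ∈ [1/3,3)` (so the sets
`s_k([1/3,3))` partition `(0,∞)`); moreover for `j ≥ 1`: `s_j(x) ≤ 2·6^{−2^{j−1}}`
whenever `0 < x ≤ 3`, and `s_{−j}(x) ≥ (1/2)·6^{2^{j−1}}` whenever `x ≥ 1/3`. -/
theorem sIter_partition_and_decay :
    (∀ x : ℝ, 0 < x → ∃! k : ℤ, sIter k x ∈ Set.Ico (1 / 3 : ℝ) 3) ∧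
    (∀ x : ℝ, 0 < x → x ≤ 3 → ∀ j : ℕ, 1 ≤ j →
      sIter (j : ℤ) x ≤ 2 * ((6 : ℝ) ^ 2 ^ (j - 1))⁻¹) ∧
    (∀ x : ℝ, 1 / 3 ≤ x → ∀ j : ℕ, 1 ≤ j →
      (1 / 2 : ℝ) * 6 ^ 2 ^ (j - 1) ≤ sIter (-(j : ℤ)) x) := by
  refine ⟨?_, ?_, ?_⟩
  · intro x hx
    obtain ⟨m, hm1, hm2⟩ := aSeq_exists_floor hx
    refine ⟨-m, ?_, ?_⟩
    · show sIter (-m) x ∈ Set.Ico (1/3 : ℝ) 3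
      rw [sIter_mem_iff _ hx, show (1 : ℤ) - -m = m + 1 by ring, neg_neg]
      exact ⟨hm1, hm2⟩
    · intro k hk
      rw [sIter_mem_iff _ hx] at hk
      obtain ⟨hk1, hk2⟩ := hk
      by_contra hne
      have hne' : -k ≠ m := fun h => hne (by omega)
      rcases lt_or_gt_of_ne hne' with h | h
      · have h1 : 1 - k ≤ m := by omega
        have := aSeq_strictAnti.antitone h1
        linarith
      · have h2 : m + 1 ≤ -k := by omega
        have := aSeq_strictAnti.antitone h2
        linarith [hm1, hk2]
  · intro x hx hx3 j hj
    rw [sIter_natCast]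
    exact sF_iter_decay hx hx3 j hj
  · intro x hx j hj
    rw [sIter_neg_natCast _ hj]
    exact sFinv_iter_growth hx j hj
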